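/- Let c > 0. There do not exist a C¹ map ν : ℝ → ℝ³ with ν(t+c) = −ν(t) and ν(t) × ν'(t) ≠ 0 for all t, together with a continuous map ξ : ℝ → ℝ³ with ‖ξ(t)‖ = 1, ξ(t+c) = −ξ(t), ξ(t)·ν(t) = 0 and ξ(t)·ν'(t) = 0 for all t. (This is the core of the proof that any Möbius developable admits at least one umbilical point: ν plays the role of an umbilic-free unit normal of a non-orientable flat strip and ξ its unit asymptotic direction field; since ξ must be a continuous scalar multiple a(t) of the c-periodic non-vanishing field ν(t) × ν'(t) with a(t+c) = −a(t), the coefficient a must vanish somewhere, contradicting ‖ξ‖ = 1.) -/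

import Mathlib

open Real

noncomputable abbrev E3 := EuclideanSpace ℝ (Fin 3)

/-- The cross product of vectors in Euclidean 3-space. -/
noncomputable def cross3 (u v : E3) : E3 :=
  (WithLp.equiv 2 (Fin 3 → ℝ)).symm
    ![u 1 * v 2 - u 2 * v 1, u 2 * v 0 - u 0 * v 2, u 0 * v 1 - u 1 * v 0]

/-- The dot product of vectors in Euclidean 3-space. -/
noncomputable def dot3 (u v : E3) : ℝ := u 0 * v 0 + u 1 * v 1 + u 2 * v 2

/-- The determinant of the 3×3 matrix with columns `u`, `v`, `w`. -/
noncomputable def det3 (u v w : E3) : ℝ := dot3 u (cross3 v w)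

private lemma aux_zero (x0 x1 x2 u0 u1 u2 v0 v1 v2 : ℝ)
    (hx : x0^2 + x1^2 + x2^2 = 1)
    (h1 : x0*u0 + x1*u1 + x2*u2 = 0)
    (h2 : x0*v0 + x1*v1 + x2*v2 = 0)
    (h3 : x0*(u1*v2 - u2*v1) + x1*(u2*v0 - u0*v2) + x2*(u0*v1 - u1*v0) = 0) :
    u1*v2 - u2*v1 = 0 ∧ u2*v0 - u0*v2 = 0 ∧ u0*v1 - u1*v0 = 0 := by
  set w0 := u1*v2 - u2*v1 with hw0
  set w1 := u2*v0 - u0*v2 with hw1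
  set w2 := u0*v1 - u1*v0 with hw2
  have k0 : x1*w2 - x2*w1 = 0 := by rw [hw1, hw2]; linear_combination u0 * h2 - v0 * h1
  have k1 : x2*w0 - x0*w2 = 0 := by rw [hw0, hw2]; linear_combination u1 * h2 - v1 * h1
  have k2 : x0*w1 - x1*w0 = 0 := by rw [hw0, hw1]; linear_combination u2 * h2 - v2 * h1
  have hs : w0^2 + w1^2 + w2^2 = 0 := by
    have h3' : x0*w0 + x1*w1 + x2*w2 = 0 := h3
    linear_combination (-(w0^2 + w1^2 + w2^2)) * hx + (x0*w0 + x1*w1 + x2*w2) * h3'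
      + (x1*w2 - x2*w1) * k0 + (x2*w0 - x0*w2) * k1 + (x0*w1 - x1*w0) * k2
  refine ⟨?_, ?_, ?_⟩ <;> nlinarith [sq_nonneg w0, sq_nonneg w1, sq_nonneg w2]

/-- Core of the proof that any Möbius developable has an umbilical point:
there is no umbilic-free anti-periodic unit normal field together with an
anti-periodic unit asymptotic direction field. -/
theorem no_umbilic_free_moebius_normal_field (c : ℝ) (hc : 0 < c) :
    ¬ ∃ (ν ξ : ℝ → E3),
      ContDiff ℝ 1 ν ∧
      (∀ t, ν (t + c) = -ν t) ∧
      (∀ t, cross3 (ν t) (deriv ν t) ≠ 0) ∧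
      Continuous ξ ∧
      (∀ t, ‖ξ t‖ = 1) ∧
      (∀ t, ξ (t + c) = -ξ t) ∧
      (∀ t, dot3 (ξ t) (ν t) = 0) ∧
      (∀ t, dot3 (ξ t) (deriv ν t) = 0) := by
  rintro ⟨ν, ξ, hν, hνa, hcr, hξc, hξn, hξa, hd1, hd2⟩
  -- derivative is also anti-periodic
  have hderiv_anti : ∀ t, deriv ν (t + c) = -deriv ν t := by
    intro t
    have h1 : deriv (fun s => ν (s + c)) t = deriv ν (t + c) := by
      simpa using deriv_comp_add_const ν c t
    have h2 : (fun s => ν (s + c)) = fun s => -ν s := funext hνa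
    rw [h2, deriv.fun_neg] at h1
    exact h1.symm
  -- continuity of coordinates
  have hdν : Continuous (deriv ν) := hν.continuous_deriv le_rfl
  have hcν : Continuous ν := hν.continuous
  set f : ℝ → ℝ := fun t => dot3 (ξ t) (cross3 (ν t) (deriv ν t)) with hf
  have hfc : Continuous f := by
    have hap : ∀ (g : ℝ → E3), Continuous g → ∀ i : Fin 3, Continuous fun t => g t i := by
      intro g hg i
      exact (PiLp.continuous_apply 2 _ i).comp hg
    simp only [hf, dot3, cross3, WithLp.equiv_symm_apply, PiLp.toLp_apply]
    simp only [Matrix.cons_val_zero, Matrix.cons_val_one, Matrix.head_cons,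
      Matrix.cons_val_two, Matrix.tail_cons]
    continuity
  have hanti : ∀ t, f (t + c) = -f t := by
    intro t
    simp only [hf, hξa, hνa, hderiv_anti, dot3, cross3, WithLp.equiv_symm_apply, PiLp.toLp_apply]
    simp only [PiLp.neg_apply, Matrix.cons_val_zero, Matrix.cons_val_one, Matrix.head_cons,
      Matrix.cons_val_two, Matrix.tail_cons]
    ring
  -- f has a zero by the intermediate value theorem
  obtain ⟨t₀, ht₀⟩ : ∃ t₀, f t₀ = 0 := by
    have hfc' : f c = -f 0 := by simpa using hanti 0
    have h0 : (0:ℝ) ∈ Set.uIcc (f 0) (f c) := by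
      rw [hfc', Set.mem_uIcc]
      rcases le_total (f 0) 0 with h | h
      · exact Or.inl ⟨h, by linarith⟩
      · exact Or.inr ⟨by linarith, h⟩
    have := intermediate_value_uIcc (f := f) (a := 0) (b := c) hfc.continuousOn
    obtain ⟨t₀, _, ht₀⟩ := this h0
    exact ⟨t₀, ht₀⟩
  -- at t₀, ξ is orthogonal to ν, ν' and ν × ν', forcing ν × ν' = 0
  set x := ξ t₀
  set u := ν t₀
  set v := deriv ν t₀
  have hx1 : x 0 ^ 2 + x 1 ^ 2 + x 2 ^ 2 = 1 := by
    have h := hξn t₀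
    rw [EuclideanSpace.norm_eq] at h
    rw [Real.sqrt_eq_one] at h
    simpa [Fin.sum_univ_three, Real.norm_eq_abs, sq_abs] using h
  have h1 : x 0 * u 0 + x 1 * u 1 + x 2 * u 2 = 0 := hd1 t₀
  have h2 : x 0 * v 0 + x 1 * v 1 + x 2 * v 2 = 0 := hd2 t₀
  have h3 : x 0 * (u 1 * v 2 - u 2 * v 1) + x 1 * (u 2 * v 0 - u 0 * v 2)
      + x 2 * (u 0 * v 1 - u 1 * v 0) = 0 := by
    have := ht₀
    simpa [hf, dot3, cross3, WithLp.equiv_symm_apply, PiLp.toLp_apply] using this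
  obtain ⟨e0, e1, e2⟩ := aux_zero (x 0) (x 1) (x 2) (u 0) (u 1) (u 2) (v 0) (v 1) (v 2)
    hx1 h1 h2 h3
  apply hcr t₀
  have : cross3 u v = 0 := by
    ext i
    fin_cases i <;>
      simp [cross3, WithLp.equiv_symm_apply, PiLp.toLp_apply, e0, e1, e2]
  exact this
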